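/- arXiv:0802.4304 — 7 statements merged into one kernel-verified Lean document; each statement's English description precedes it below -/
import Mathlib

section
/- Let G be a group acting on a uniform space X. If the action is uniformly properly discontinuous, i.e., there exists an entourage E of X such that for all x ∈ X and g ∈ G, (x, g·x) ∈ E implies g = 1, then the projection p: X → X/G has the uniqueness of chain lifts property: there is an entourage F of X such that any two F-chains originating at the same point with equal images under p are equal. -/
open scoped Uniformity

/-- Symmetric relation (as in the older Mathlib, where `SymmetricRel` was defined this way). -/
def SymmetricRel {α : Type*} (V : Set (α × α)) : Prop :=
  Prod.swap ⁻¹' V = V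

/-- An `E`-chain: consecutive members of the list are `E`-related. -/
def ChainIn {α : Type*} (E : Set (α × α)) (c : List α) : Prop :=
  c.Chain' fun a b => (a, b) ∈ E

/-- The image `f(E)` of a relation under a map. -/
def imgRel {α β : Type*} (f : α → β) (E : Set (α × α)) : Set (β × β) :=
  Prod.map f f '' E

/-- The orbit projection `p : X → X/G`. -/
def proj (G X : Type*) [Group G] [MulAction G X] :
    X → Quotient (MulAction.orbitRel G X) :=
  Quotient.mk (MulAction.orbitRel G X)

/-- `G_F`: the subgroup of `G` generated by `S_F = {h | (x, h • x) ∈ F for some x}`. -/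
def GF (G : Type*) {X : Type*} [Group G] [MulAction G X] (F : Set (X × X)) : Subgroup G :=
  Subgroup.closure {h : G | ∃ x : X, (x, h • x) ∈ F}

/-- Chain lifting property for `f : X → Y`: for every (symmetric) entourage `E` of `X`
there is an entourage `F` such that every `f(F)`-chain starting at `f x₀` lifts to an
`E`-chain starting at `x₀`. -/
def HasChainLifting {X Y : Type*} [UniformSpace X] (f : X → Y) : Prop :=
  ∀ E ∈ 𝓤 X, SymmetricRel E → ∃ F ∈ 𝓤 X, SymmetricRel F ∧
    ∀ (x₀ : X) (d : List Y), ChainIn (imgRel f F) d → d.head? = some (f x₀) →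
      ∃ c : List X, ChainIn E c ∧ c.head? = some x₀ ∧ c.map f = d

/-- Uniqueness of chain lifts: there is an entourage `F` such that two `F`-chains with the
same origin and the same image are equal. -/
def HasUniqueChainLifts {X Y : Type*} [UniformSpace X] (f : X → Y) : Prop :=
  ∃ F ∈ 𝓤 X, SymmetricRel F ∧
    ∀ α β : List X, ChainIn F α → ChainIn F β →
      α.head? = β.head? → α.map f = β.map f → α = β

/-- Approximate uniqueness of chain lifts: for every entourage `E` there is an entourage `F`
such that two `F`-chains with the same origin and the same image are `E`-close. -/
def HasApproxUniqueChainLifts {X Y : Type*} [UniformSpace X] (f : X → Y) : Prop :=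
  ∀ E ∈ 𝓤 X, SymmetricRel E → ∃ F ∈ 𝓤 X, SymmetricRel F ∧
    ∀ α β : List X, ChainIn F α → ChainIn F β →
      α.head? = β.head? → α.map f = β.map f →
        List.Forall₂ (fun a b => (a, b) ∈ E) α β

/-- Neutral action. -/
def Neutral (G X : Type*) [Group G] [MulAction G X] [UniformSpace X] : Prop :=
  ∀ E ∈ 𝓤 X, SymmetricRel E → ∃ F ∈ 𝓤 X, SymmetricRel F ∧
    ∀ (x y : X) (h : G), (x, h • y) ∈ F → ∃ g : G, (g • x, y) ∈ E

/-- Uniformly properly discontinuous action. -/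
def UnifProperlyDiscontinuous (G X : Type*) [Group G] [MulAction G X] [UniformSpace X] : Prop :=
  ∃ E ∈ 𝓤 X, SymmetricRel E ∧ ∀ (x : X) (g : G), (x, g • x) ∈ E → g = 1

/-- Equicontinuous action. -/
def EquicontinuousAction (G X : Type*) [Group G] [MulAction G X] [UniformSpace X] : Prop :=
  ∀ E ∈ 𝓤 X, ∃ F ∈ 𝓤 X, ∀ (g : G) (x y : X), (x, y) ∈ F → (g • x, g • y) ∈ E

/-- Small scale uniformly continuous action. -/
def SSUnifCont (G X : Type*) [Group G] [MulAction G X] [UniformSpace X] : Prop :=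
  ∀ E ∈ 𝓤 X, SymmetricRel E → ∃ F ∈ 𝓤 X, SymmetricRel F ∧
    ∀ g ∈ GF G F, {q : X × X | (g • q.1, g • q.2) ∈ E} ∈ 𝓤 X

/-- Small scale uniformly equicontinuous action. -/
def SSUnifEquicont (G X : Type*) [Group G] [MulAction G X] [UniformSpace X] : Prop :=
  ∀ E ∈ 𝓤 X, SymmetricRel E → ∃ F ∈ 𝓤 X, SymmetricRel F ∧
    ∀ g ∈ GF G F, ∀ x y : X, (x, y) ∈ F → (g • x, g • y) ∈ E

/-- Small scale bounded orbits: the orbits of `G_F` are `E`-bounded. -/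
def SSBoundedOrbits (G X : Type*) [Group G] [MulAction G X] [UniformSpace X] : Prop :=
  ∀ E ∈ 𝓤 X, SymmetricRel E → ∃ F ∈ 𝓤 X, SymmetricRel F ∧
    ∀ x : X, ∀ g ∈ GF G F, ∀ g' ∈ GF G F, (g • x, g' • x) ∈ E

/-- Chain connected uniform space. -/
def ChainConnectedU (X : Type*) [UniformSpace X] : Prop :=
  ∀ E ∈ 𝓤 X, SymmetricRel E → ∀ x y : X,
    ∃ c : List X, ChainIn E c ∧ c.head? = some x ∧ c.getLast? = some y

/-- A uniformly properly discontinuous action yields uniqueness of chain lifts for the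
orbit projection. -/
theorem stmt1 (G X : Type*) [Group G] [MulAction G X] [UniformSpace X]
    (h : UnifProperlyDiscontinuous G X) :
    HasUniqueChainLifts (proj G X) := by
  obtain ⟨E, hE, hEs, hE1⟩ := h
  obtain ⟨F, hF, hFs, hFE⟩ := comp_symm_mem_uniformity_sets hE
  refine ⟨F, hF, Set.ext fun p => ⟨fun hp => hFs.symm _ _ hp, fun hp => hFs.symm _ _ hp⟩, ?_⟩
  intro α
  induction α with
  | nil =>
    intro β _ _ _ hmap
    exact (List.map_eq_nil_iff.mp hmap.symm).symm
  | cons a as ih =>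
    intro β hα hβ hhead hmap
    cases β with
    | nil => exact absurd hmap (by simp)
    | cons b bs =>
      simp only [List.head?_cons, Option.some.injEq] at hhead
      subst hhead
      simp only [List.map_cons, List.cons.injEq] at hmap
      have htail : as.head? = bs.head? := by
        cases as with
        | nil =>
          have : bs.map (proj G X) = [] := hmap.2.symm
          rw [List.map_eq_nil_iff.mp this]
        | cons a' as' =>
          cases bs with
          | nil => exact absurd hmap.2 (by simp)
          | cons b' bs' =>
            have haa' : (a, a') ∈ F := (List.isChain_cons_cons.mp hα).1
            have hab' : (a, b') ∈ F := (List.isChain_cons_cons.mp hβ).1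
            have hpq : proj G X a' = proj G X b' := by
              simpa using congrArg List.head? hmap.2
            obtain ⟨g, hg⟩ := MulAction.mem_orbit_iff.mp
              ((MulAction.orbitRel_apply (G := G)).mp (Quotient.eq''.mp hpq))
            -- hg : g • b' = a'
            have hE' : (a', b') ∈ E := hFE ⟨a, hFs.symm _ _ haa', hab'⟩
            have : (b', g • b') ∈ E := by rw [hg]; rw [← hEs] at hE'; exact hE'
            have hg1 : g = 1 := hE1 b' g this
            rw [hg1, one_smul] at hg
            simp [hg]
      rw [ih bs hα.tail hβ.tail htail hmap.2]
end

section
/- Let G be a group acting faithfully on a chain connected uniform space X, with the action small scale uniformly continuous. If the projection p: X → X/G has the uniqueness of chain lifts property, then the action is uniformly properly discontinuous. -/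
open scoped Uniformity

lemma proj_smul {G X : Type*} [Group G] [MulAction G X] (g : G) (x : X) :
    proj G X (g • x) = proj G X x :=
  Quotient.sound ⟨g, rfl⟩

/-- For a faithful, small scale uniformly continuous action on a chain connected uniform
space, uniqueness of chain lifts for the projection implies the action is uniformly
properly discontinuous. -/
theorem stmt2 (G X : Type*) [Group G] [MulAction G X] [UniformSpace X]
    (hcc : ChainConnectedU X)
    (hfaithful : ∀ g : G, (∀ x : X, g • x = x) → g = 1)
    (hss : SSUnifCont G X)
    (huniq : HasUniqueChainLifts (proj G X)) :
    UnifProperlyDiscontinuous G X := by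
  obtain ⟨F, hF, hFsymm, hFuniq⟩ := huniq
  obtain ⟨F', hF', hF'symm, hF'cont⟩ := hss F hF hFsymm
  refine ⟨F ∩ F', Filter.inter_mem hF hF', (by unfold SymmetricRel at *; rw [Set.preimage_inter, hFsymm, hF'symm]), ?_⟩
  intro x g hxg
  have hgF' : g ∈ GF G F' := Subgroup.subset_closure ⟨x, hxg.2⟩
  have hD : {q : X × X | (g • q.1, g • q.2) ∈ F} ∈ 𝓤 X := hF'cont g hgF'
  have hx : g • x = x := by
    have h1 : ChainIn F [x, g • x] := List.isChain_pair.mpr hxg.1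
    have h2 : ChainIn F [x, x] := List.isChain_pair.mpr (refl_mem_uniformity hF)
    have heq := hFuniq [x, g • x] [x, x] h1 h2 rfl (by simp [proj_smul])
    simpa using heq
  apply hfaithful
  intro y
  set W := SetRel.symmetrize (F ∩ {q : X × X | (g • q.1, g • q.2) ∈ F}) with hWdef
  have hW : W ∈ 𝓤 X := symmetrize_mem_uniformity (Filter.inter_mem hF hD)
  obtain ⟨c, hc, hhead, hlast⟩ := hcc W hW (by ext ⟨a, b⟩; simp only [Set.mem_preimage, Prod.swap_prod_mk, W, SetRel.symmetrize, SetRel.inv, Set.mem_inter_iff]; tauto) x y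
  have hcF : ChainIn F c := hc.imp fun _ _ h => h.1.1
  have hcF2 : ChainIn F (c.map (g • ·)) := by
    rw [ChainIn, List.Chain', List.isChain_map]
    exact hc.imp fun _ _ h => h.1.2
  have hheads : c.head? = (c.map (g • ·)).head? := by
    rw [List.head?_map, hhead, Option.map_some, hx]
  have hmaps : c.map (proj G X) = (c.map (g • ·)).map (proj G X) := by
    rw [List.map_map]
    exact List.map_congr_left fun a _ => (proj_smul g a).symm
  have heq := hFuniq c (c.map (g • ·)) hcF hcF2 hheads hmaps
  have : c.getLast? = (c.map (g • ·)).getLast? := congrArg _ heq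
  rw [List.getLast?_map, hlast, Option.map_some] at this
  exact (Option.some_injective _ this).symm
end

section
/- Let G act on a uniform space X. If the action has small scale bounded orbits (for each entourage E there is an entourage F such that the orbits of G_F acting on X are E-bounded), then the action is small scale uniformly equicontinuous: for each entourage E there is an entourage F such that F ⊂ g⁻¹(E) for every g ∈ G_F. -/
open scoped Uniformity

/-- Small scale bounded orbits implies small scale uniform equicontinuity. -/
theorem stmt4 (G X : Type*) [Group G] [MulAction G X] [UniformSpace X]
    (h : SSBoundedOrbits G X) : SSUnifEquicont G X := by
  intro E hE hEsymm
  obtain ⟨D, hD, hDsymm', hDE⟩ := comp_comp_symm_mem_uniformity_sets hE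
  have hDsymm : SymmetricRel D :=
    Set.ext fun p => ⟨fun hp => hDsymm'.symm _ _ hp, fun hp => hDsymm'.symm _ _ hp⟩
  obtain ⟨F', hF', hF'symm, hbnd⟩ := h D hD hDsymm
  refine ⟨F' ∩ D, Filter.inter_mem hF' hD, ?_, ?_⟩
  · simp only [SymmetricRel, Set.preimage_inter] at *
    rw [hF'symm, hDsymm]
  · intro g hg x y hxy
    have hgF' : g ∈ GF G F' := by
      refine Subgroup.closure_mono ?_ hg
      rintro k ⟨z, hz⟩
      exact ⟨z, hz.1⟩
    have h1 : (g • x, x) ∈ D := by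
      have := hbnd x g hgF' 1 (Subgroup.one_mem _)
      rwa [one_smul] at this
    have h2 : (y, g • y) ∈ D := by
      have := hbnd y g hgF' 1 (Subgroup.one_mem _)
      rw [one_smul] at this
      exact hDsymm'.symm _ _ this
    exact hDE ⟨y, ⟨x, h1, hxy.2⟩, h2⟩
end

section
/- Let G act small scale uniformly equicontinuously on a chain connected uniform space X. If the projection p: X → X/G has approximate uniqueness of chain lifts, then the action has small scale bounded orbits. -/
open scoped Uniformity

lemma last_of_forall₂ {α β : Type*} {R : α → β → Prop} {l₁ : List α} {l₂ : List β} {a : α}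
    {b : β} (h : List.Forall₂ R l₁ l₂) (h₁ : l₁.getLast? = some a)
    (h₂ : l₂.getLast? = some b) : R a b := by
  rw [← List.head?_reverse] at h₁ h₂
  have h' := List.forall₂_reverse_iff.2 h
  set m₁ := l₁.reverse with hm₁
  set m₂ := l₂.reverse with hm₂
  clear_value m₁ m₂
  cases h' with
  | nil => simp at h₁
  | cons hr ht =>
    simp only [List.head?_cons, Option.some.injEq] at h₁ h₂
    rwa [h₁, h₂] at hr

/-- For a small scale uniformly equicontinuous action on a chain connected space,
approximate uniqueness of chain lifts for the projection implies small scale bounded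
orbits. -/
theorem stmt6 (G X : Type*) [Group G] [MulAction G X] [UniformSpace X]
    (hss : SSUnifEquicont G X) (hcc : ChainConnectedU X)
    (happrox : HasApproxUniqueChainLifts (proj G X)) :
    SSBoundedOrbits G X := by
  intro E hE hEsym
  obtain ⟨F₁, hF₁u, hF₁sym, hF₁⟩ := happrox E hE hEsym
  obtain ⟨F₀, hF₀u, hF₀sym, hF₀⟩ := hss F₁ hF₁u hF₁sym
  set F : Set (X × X) := F₀ ∩ F₁ with hFdef
  have hFu : F ∈ 𝓤 X := Filter.inter_mem hF₀u hF₁u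
  have hFsym : SymmetricRel F := by
    show Prod.swap ⁻¹' (F₀ ∩ F₁) = F₀ ∩ F₁
    rw [Set.preimage_inter]
    rw [show Prod.swap ⁻¹' F₀ = F₀ from hF₀sym, show Prod.swap ⁻¹' F₁ = F₁ from hF₁sym]
  have hGF : GF G F ≤ GF G F₀ := by
    apply Subgroup.closure_mono
    rintro h ⟨x, hx⟩
    exact ⟨x, hx.1⟩
  have hmap : ∀ g ∈ GF G F, ∀ a b : X, (a, b) ∈ F → (g • a, g • b) ∈ F₁ :=
    fun g hg a b hab => hF₀ g (hGF hg) a b hab.1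
  have hsubF₁ : F ⊆ F₁ := Set.inter_subset_right
  have hrefl₁ : ∀ z : X, (z, z) ∈ F₁ := fun z => refl_mem_uniformity hF₁u
  have hcc' := hcc F hFu hFsym
  have projconst : ∀ (g : G) (a : X), proj G X (g • a) = proj G X a :=
    fun g a => Quotient.sound ⟨g, rfl⟩
  -- Key construction: for a word in the generators, two F₁-chains with common head,
  -- equal projections, ending at x and (word • x) respectively.
  have key : ∀ l : List G, (∀ s ∈ l, ∃ y : X, (y, s • y) ∈ F) → ∀ x : X,
      ∃ A B : List X, ChainIn F₁ A ∧ ChainIn F₁ B ∧ A.head? = B.head? ∧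
        A.map (proj G X) = B.map (proj G X) ∧ A.getLast? = some x ∧
        B.getLast? = some (l.prod • x) := by
    intro l
    induction l using List.reverseRecOn with
    | nil =>
      intro _ x
      exact ⟨[x], [x], List.isChain_singleton x, List.isChain_singleton x, rfl, rfl, rfl,
        by simp⟩
    | append_singleton l s ih =>
      intro hls x
      obtain ⟨y, hy⟩ := hls s (by simp)
      obtain ⟨A, B, hA, hB, hhead, himg, hAl, hBl⟩ := ih (fun t ht => hls t (by simp [ht])) y
      obtain ⟨c, hc, hch, hcl⟩ := hcc' y x
      have hsmem : s ∈ GF G F := Subgroup.subset_closure (hls s (by simp))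
      have hw : l.prod ∈ GF G F :=
        Subgroup.list_prod_mem _ fun t ht => Subgroup.subset_closure (hls t (by simp [ht]))
      have hg : (l.prod * s) ∈ GF G F := mul_mem hw hsmem
      have hcne : c ≠ [] := by rintro rfl; simp at hch
      have hAne : A ≠ [] := by rintro rfl; simp at hAl
      have hBne : B ≠ [] := by rintro rfl; simp at hBl
      refine ⟨A ++ c, B ++ c.map ((l.prod * s) • ·), ?_, ?_, ?_, ?_, ?_, ?_⟩
      · rw [ChainIn, List.Chain', List.isChain_append]
        refine ⟨hA, hc.imp fun a b hab => hsubF₁ hab, ?_⟩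
        intro u hu v hv
        rw [hAl, Option.mem_def, Option.some.injEq] at hu
        rw [hch, Option.mem_def, Option.some.injEq] at hv
        subst hu; subst hv
        exact hrefl₁ y
      · rw [ChainIn, List.Chain', List.isChain_append]
        refine ⟨hB, List.isChain_map_of_isChain _ (fun a b hab => hmap _ hg a b hab) hc, ?_⟩
        intro u hu v hv
        rw [hBl, Option.mem_def, Option.some.injEq] at hu
        rw [List.head?_map, hch, Option.map_some] at hv
        rw [Option.mem_def, Option.some.injEq] at hv
        subst hu; subst hv
        have := hmap _ hw y (s • y) hy
        rwa [← mul_smul] at this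
      · rw [List.head?_append, List.head?_append]
        cases A with
        | nil => exact absurd rfl hAne
        | cons a t =>
          cases B with
          | nil => exact absurd rfl hBne
          | cons b u => simpa using hhead
      · rw [List.map_append, List.map_append, himg, List.map_map]
        congr 1
        apply List.map_congr_left
        intro a _
        exact (projconst _ a).symm
      · rw [List.getLast?_append, hcl]; rfl
      · rw [List.getLast?_append, List.getLast?_map, hcl]
        simp [mul_smul]
  -- Every element of G_F moves every point by at most E.
  have claim : ∀ g ∈ GF G F, ∀ z : X, (z, g • z) ∈ E := by
    intro g hg z
    have hg' : g ∈ Submonoid.closure ({h : G | ∃ x : X, (x, h • x) ∈ F} ∪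
        {h : G | ∃ x : X, (x, h • x) ∈ F}⁻¹) := by
      rw [← Subgroup.closure_toSubmonoid]
      exact hg
    obtain ⟨lst, hlmem, hlprod⟩ := Submonoid.exists_list_of_mem_closure hg'
    have hlmem' : ∀ s ∈ lst, ∃ y : X, (y, s • y) ∈ F := by
      intro s hs
      rcases hlmem s hs with h | h
      · exact h
      · obtain ⟨x, hx⟩ := Set.mem_inv.1 h
        refine ⟨s⁻¹ • x, ?_⟩
        have hx' : (s⁻¹ • x, x) ∈ F := by rw [← hFsym] at hx; exact hx
        rw [smul_inv_smul]
        exact hx'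
    obtain ⟨A, B, hA, hB, hh, hi, hAl, hBl⟩ := key lst hlmem' z
    rw [hlprod] at hBl
    exact last_of_forall₂ (R := fun a b => (a, b) ∈ E) (hF₁ A B hA hB hh hi) hAl hBl
  refine ⟨F, hFu, hFsym, ?_⟩
  intro x g hg g' hg'
  have := claim (g' * g⁻¹) (mul_mem hg' (inv_mem hg)) (g • x)
  rwa [smul_smul, inv_mul_cancel_right] at this
end

section
/- Suppose G acts faithfully on a Hausdorff uniform space X. If the action has small scale bounded orbits, then the action is free: g·x = x for some x ∈ X implies g = 1. -/
open scoped Uniformity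

/-- A faithful action with small scale bounded orbits on a Hausdorff uniform space
(the intersection of all entourages is the diagonal) is free. -/
theorem stmt7 (G X : Type*) [Group G] [MulAction G X] [UniformSpace X]
    (hHausdorff : ∀ x y : X, (∀ E ∈ 𝓤 X, (x, y) ∈ E) → x = y)
    (hfaithful : ∀ g : G, (∀ x : X, g • x = x) → g = 1)
    (h : SSBoundedOrbits G X) :
    ∀ (g : G) (x : X), g • x = x → g = 1 := by
  intro g x hgx
  apply hfaithful
  intro y
  apply hHausdorff
  intro E hE
  obtain ⟨F, hF, hFsymm, horb⟩ :=
    h (SetRel.symmetrize E) (symmetrize_mem_uniformity hE)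
      (by unfold SymmetricRel; ext ⟨a, b⟩; simp [SetRel.symmetrize, and_comm])
  have hg : g ∈ GF G F :=
    Subgroup.subset_closure ⟨x, by simpa [hgx] using refl_mem_uniformity hF⟩
  have h1 : (1 : G) ∈ GF G F := (GF G F).one_mem
  have := horb y g hg 1 h1
  simpa using SetRel.symmetrize_subset_self this
end

section
/- Suppose a group G acts small scale equicontinuously and neutrally on a chain connected uniform space X and the projection p: X → X/G is a generalized uniform covering map. Then the uniform convergence structure and the small scale uniform convergence structure on G coincide; specifically, for every entourage E of X there is an entourage F of X such that g·h⁻¹ ∈ G_F implies (g·x, h·x) ∈ E for all x ∈ X. -/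
open scoped Uniformity

section Aux

theorem SymmetricRel.mk_mem_comm {α : Type*} {V : Set (α × α)} (hV : SymmetricRel V)
    {x y : α} : (x, y) ∈ V ↔ (y, x) ∈ V := by
  have := Set.ext_iff.1 hV (y, x)
  exact this

theorem SymmetricRel.inter {α : Type*} {U V : Set (α × α)} (hU : SymmetricRel U)
    (hV : SymmetricRel V) : SymmetricRel (U ∩ V) := by
  unfold SymmetricRel at *
  rw [Set.preimage_inter, hU, hV]

private lemma forall₂_head?_aux {α β : Type*} {R : α → β → Prop} {l₁ : List α} {l₂ : List β}
    (h : List.Forall₂ R l₁ l₂) {a : α} {b : β}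
    (ha : l₁.head? = some a) (hb : l₂.head? = some b) : R a b := by
  cases h with
  | nil => simp at ha
  | cons h' _ => simp_all

private lemma forall₂_getLast?_aux {α β : Type*} {R : α → β → Prop} {l₁ : List α} {l₂ : List β}
    (h : List.Forall₂ R l₁ l₂) {a : α} {b : β}
    (ha : l₁.getLast? = some a) (hb : l₂.getLast? = some b) : R a b := by
  refine forall₂_head?_aux (List.forall₂_reverse_iff.mpr h) ?_ ?_ <;>
    simp [List.head?_reverse, ha, hb]

end Aux

/-- If a small scale uniformly equicontinuous, neutral action on a chain connected space
induces a generalized uniform covering projection (in particular `p` has chain lifting and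
approximate uniqueness of chain lifts), then the uniform convergence structure and the
small scale uniform convergence structure on `G` coincide: for every entourage `E` there
is an entourage `F` with `g·h⁻¹ ∈ G_F → (g•x, h•x) ∈ E` for all `x`. -/
theorem stmt14 (G X : Type*) [Group G] [MulAction G X] [UniformSpace X]
    (hss : SSUnifEquicont G X) (hneutral : Neutral G X) (hcc : ChainConnectedU X)
    (hcl : HasChainLifting (proj G X))
    (happrox : HasApproxUniqueChainLifts (proj G X)) :
    ∀ E ∈ 𝓤 X, SymmetricRel E → ∃ F ∈ 𝓤 X, SymmetricRel F ∧
      ∀ g h : G, g * h⁻¹ ∈ GF G F → ∀ x : X, (g • x, h • x) ∈ E := by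
  intro E hE hEsym
  obtain ⟨F₀, hF₀u, hF₀sym, hF₀uniq⟩ := happrox E hE hEsym
  obtain ⟨F₁, hF₁u, hF₁sym, hF₁eq⟩ := hss F₀ hF₀u hF₀sym
  set F : Set (X × X) := F₁ ∩ F₀ with hFdef
  have hFu : F ∈ 𝓤 X := Filter.inter_mem hF₁u hF₀u
  have hFsym : SymmetricRel F := hF₁sym.inter hF₀sym
  have hF1 : F ⊆ F₁ := Set.inter_subset_left
  have hF0 : F ⊆ F₀ := Set.inter_subset_right
  have hmono : GF G F ≤ GF G F₁ :=
    Subgroup.closure_mono (by rintro g ⟨x, hx⟩; exact ⟨x, hF1 hx⟩)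
  -- The auxiliary relation on labelled points.
  let R : G × X → G × X → Prop := fun q q' =>
    q.1 ∈ GF G F ∧ q'.1 ∈ GF G F ∧
      ((q'.1 = q.1 ∧ (q.2, q'.2) ∈ F) ∨
       (q'.2 = q.2 ∧ ((q.2, (q.1⁻¹ * q'.1) • q.2) ∈ F ∨
                      (q.2, (q'.1⁻¹ * q.1) • q.2) ∈ F)))
  -- R is symmetric
  have hRsymm : ∀ q q', R q q' → R q' q := by
    rintro ⟨g, z⟩ ⟨g', z'⟩ ⟨h1, h2, hc⟩
    refine ⟨h2, h1, ?_⟩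
    rcases hc with ⟨he, hm⟩ | ⟨he, hm⟩
    · exact Or.inl ⟨he.symm, hFsym.mk_mem_comm.mp hm⟩
    · subst he
      exact Or.inr ⟨rfl, hm.symm⟩
  -- R is invariant under left multiplication on labels
  have hRmul : ∀ (a : G), a ∈ GF G F → ∀ q q', R q q' →
      R (a * q.1, q.2) (a * q'.1, q'.2) := by
    rintro a ha ⟨g, z⟩ ⟨g', z'⟩ ⟨h1, h2, hc⟩
    refine ⟨mul_mem ha h1, mul_mem ha h2, ?_⟩
    rcases hc with ⟨he, hm⟩ | ⟨he, hm⟩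
    · exact Or.inl ⟨by rw [he], hm⟩
    · refine Or.inr ⟨he, ?_⟩
      simpa [mul_inv_rev, mul_assoc] using hm
  have keyR : ∀ k ∈ GF G F, ∀ x : X, ∃ L : List (G × X),
      L.Chain' R ∧ L.head? = some (1, x) ∧ L.getLast? = some (k, x) := by
    intro k hk
    have hk' : k ∈ Subgroup.closure {h : G | ∃ x : X, (x, h • x) ∈ F} := hk
    clear hk
    induction hk' using Subgroup.closure_induction with
    | mem h hh =>
      intro x
      obtain ⟨y, hy⟩ := hh
      have hhm : h ∈ GF G F := Subgroup.subset_closure ⟨y, hy⟩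
      obtain ⟨c, hc, hch, hcl⟩ := hcc F hFu hFsym x y
      obtain ⟨c', hc', hch', hcl'⟩ := hcc F hFu hFsym y x
      refine ⟨c.map (fun z => ((1 : G), z)) ++ c'.map (fun z => (h, z)), ?_, ?_, ?_⟩
      · refine List.IsChain.append ?_ ?_ ?_
        · exact (List.isChain_map _).mpr
            (hc.imp (fun a b hab => ⟨one_mem _, one_mem _, Or.inl ⟨rfl, hab⟩⟩))
        · exact (List.isChain_map _).mpr
            (hc'.imp (fun a b hab => ⟨hhm, hhm, Or.inl ⟨rfl, hab⟩⟩))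
        · intro q hq q' hq'
          rw [Option.mem_def, List.getLast?_map, hcl, Option.map_some] at hq
          rw [Option.mem_def, List.head?_map, hch', Option.map_some] at hq'
          cases hq.symm.trans rfl
          cases hq'.symm.trans rfl
          exact ⟨one_mem _, hhm, Or.inr ⟨rfl, Or.inl (by simpa using hy)⟩⟩
      · rw [List.head?_append, List.head?_map, hch, Option.map_some]; rfl
      · rw [List.getLast?_append, List.getLast?_map, hcl', Option.map_some]; rfl
    | one =>
      intro x
      exact ⟨[(1, x)], List.isChain_singleton _, rfl, rfl⟩
    | mul a b ha hb iha ihb =>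
      intro x
      obtain ⟨La, hLa, hha, hla⟩ := iha x
      obtain ⟨Lb, hLb, hhb, hlb⟩ := ihb x
      have ham : a ∈ GF G F := ha
      refine ⟨La ++ Lb.map (fun q => (a * q.1, q.2)), ?_, ?_, ?_⟩
      · refine List.IsChain.append hLa ?_ ?_
        · exact (List.isChain_map _).mpr (hLb.imp (fun q q' h => hRmul a ham q q' h))
        · intro q hq q' hq'
          rw [Option.mem_def, hla] at hq
          rw [Option.mem_def, List.head?_map, hhb, Option.map_some] at hq'
          cases hq.symm.trans rfl
          cases hq'.symm.trans rfl
          exact ⟨ham, by simpa using ham, Or.inl ⟨by simp, refl_mem_uniformity hFu⟩⟩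
      · rw [List.head?_append, hha]; rfl
      · rw [List.getLast?_append, List.getLast?_map, hlb, Option.map_some]; rfl
    | inv a ha iha =>
      intro x
      obtain ⟨L, hL, hh, hl⟩ := iha x
      have ham : a⁻¹ ∈ GF G F := inv_mem ha
      refine ⟨(L.reverse).map (fun q => (a⁻¹ * q.1, q.2)), ?_, ?_, ?_⟩
      · refine (List.isChain_map _).mpr (List.isChain_reverse.mpr ?_)
        exact hL.imp (fun q q' h => hRmul a⁻¹ ham q' q (hRsymm q q' h))
      · rw [List.head?_map, List.head?_reverse, hl, Option.map_some]
        simp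
      · rw [List.getLast?_map, List.getLast?_reverse, hh, Option.map_some]
        simp
  refine ⟨F, hFu, hFsym, ?_⟩
  intro g h hgh x'
  set k := g * h⁻¹ with hkdef
  set x := h • x' with hxdef
  obtain ⟨L, hL, hh, hl⟩ := keyR k hgh x
  -- the two chains
  have hα : ChainIn F₀ (L.map Prod.snd) := by
    refine (List.isChain_map _).mpr (hL.imp ?_)
    rintro ⟨g₁, z⟩ ⟨g₂, z'⟩ ⟨_, _, hc⟩
    rcases hc with ⟨_, hm⟩ | ⟨he, _⟩
    · exact hF0 hm
    · simp only at he
      rw [he]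
      exact refl_mem_uniformity hF₀u
  have hβ : ChainIn F₀ (L.map (fun q => q.1 • q.2)) := by
    refine (List.isChain_map _).mpr (hL.imp ?_)
    rintro ⟨g₁, z⟩ ⟨g₂, z'⟩ ⟨h1, h2, hc⟩
    rcases hc with ⟨he, hm⟩ | ⟨he, hm | hm⟩
    · simp only at he
      rw [he]
      exact hF₁eq g₁ (hmono h1) _ _ (hF1 hm)
    · simp only at he
      rw [he]
      have := hF₁eq g₁ (hmono h1) _ _ (hF1 hm)
      rwa [smul_smul, mul_inv_cancel_left] at this
    · simp only at he
      rw [he]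
      have := hF₁eq g₂ (hmono h2) _ _ (hF1 hm)
      rw [smul_smul, mul_inv_cancel_left] at this
      exact hF₀sym.mk_mem_comm.mp this
  have hmapeq : (L.map Prod.snd).map (proj G X) =
      (L.map (fun q => q.1 • q.2)).map (proj G X) := by
    simp only [List.map_map]
    refine List.map_congr_left ?_
    rintro ⟨g₁, z⟩ _
    show proj G X z = proj G X (g₁ • z)
    exact Quotient.sound ((MulAction.orbitRel_apply (G := G)).mpr
      (MulAction.mem_orbit_iff.mpr ⟨g₁⁻¹, inv_smul_smul g₁ z⟩))
  have hheads : (L.map Prod.snd).head? = (L.map (fun q => q.1 • q.2)).head? := by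
    rw [List.head?_map, List.head?_map, hh]
    simp
  have hF2 := hF₀uniq _ _ hα hβ hheads hmapeq
  have hmain : (x, k • x) ∈ E := by
    refine forall₂_getLast?_aux hF2 ?_ ?_
    · rw [List.getLast?_map, hl]; rfl
    · rw [List.getLast?_map, hl]; rfl
  have hkx : k • x = g • x' := by
    rw [hkdef, hxdef, smul_smul, inv_mul_cancel_right]
  rw [hkx] at hmain
  exact hEsym.mk_mem_comm.mp hmain
end

section
/- Let G act on a uniform space X. The projection p: X → X/G is a uniform covering map if and only if the action is neutral and there exists an entourage E₀ of X such that (x, g·x) ∈ E₀ implies g·x = x. -/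
open scoped Uniformity

theorem symmetricRel_of_isSymm {α : Type*} (V : SetRel α α) [V.IsSymm] : SymmetricRel V := by
  ext ⟨a, b⟩
  exact ⟨fun h => SetRel.symm V h, fun h => SetRel.symm V h⟩

section Aux

variable {G X : Type*} [Group G] [MulAction G X] [UniformSpace X]

lemma proj_eq_iff {a b : X} : proj G X a = proj G X b ↔ ∃ g : G, g • b = a := by
  rw [proj, Quotient.eq]
  exact MulAction.orbitRel_apply.trans MulAction.mem_orbit_iff

lemma lift_chain (E : Set (X × X)) (hEsym : SymmetricRel E)
    (F : Set (X × X)) (hFsym : SymmetricRel F)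
    (hN : ∀ (x y : X) (h : G), (x, h • y) ∈ F → ∃ g : G, (g • x, y) ∈ E) :
    ∀ (d : List (Quotient (MulAction.orbitRel G X))) (x₀ : X),
      ChainIn (imgRel (proj G X) F) d → d.head? = some (proj G X x₀) →
      ∃ c : List X, ChainIn E c ∧ c.head? = some x₀ ∧ c.map (proj G X) = d := by
  intro d
  induction d with
  | nil => intro x₀ _ hh; simp at hh
  | cons q d' ih =>
    intro x₀ hc hh
    have hq : q = proj G X x₀ := by simpa using hh
    rw [ChainIn, List.Chain', List.isChain_cons] at hc
    cases d' with
    | nil =>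
      exact ⟨[x₀], by simp [ChainIn, List.Chain'], by simp, by simp [hq]⟩
    | cons q' d'' =>
      have hqq' : (q, q') ∈ imgRel (proj G X) F := hc.1 q' (by simp)
      obtain ⟨⟨a, b⟩, hab, heq⟩ := hqq'
      have hpa : proj G X a = q := congrArg Prod.fst heq
      have hpb : proj G X b = q' := congrArg Prod.snd heq
      obtain ⟨h, hhx⟩ := proj_eq_iff.mp (hpa.trans hq)
      have hba : (b, h • x₀) ∈ F := hFsym.mk_mem_comm.mp (by rwa [hhx])
      obtain ⟨g, hg⟩ := hN b x₀ h hba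
      have hx₁ : proj G X (g • b) = q' := by
        rw [← hpb]; exact proj_eq_iff.mpr ⟨g, rfl⟩
      obtain ⟨c', hc', hch', hcm'⟩ := ih (g • b) hc.2 (by simp [hx₁])
      refine ⟨x₀ :: c', ?_, by simp, by simp [hq, hcm']⟩
      rw [ChainIn, List.Chain', List.isChain_cons]
      refine ⟨?_, hc'⟩
      intro y hy
      rw [hch'] at hy
      cases hy
      exact hEsym.mk_mem_comm.mp hg

lemma unique_lift (E₀ : Set (X × X))
    (hE₀ : ∀ (x : X) (g : G), (x, g • x) ∈ E₀ → g • x = x)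
    (F : Set (X × X)) (hFsym : SymmetricRel F) (hFE : SetRel.comp F F ⊆ E₀) :
    ∀ (α β : List X), ChainIn F α → ChainIn F β → α.head? = β.head? →
      α.map (proj G X) = β.map (proj G X) → α = β := by
  intro α
  induction α with
  | nil =>
    intro β _ _ _ hm
    cases β with
    | nil => rfl
    | cons b β' => simp at hm
  | cons a α' ih =>
    intro β hα hβ hh hm
    cases β with
    | nil => simp at hm
    | cons b β' =>
      have hab : a = b := by simpa using hh
      subst hab
      cases α' with
      | nil =>
        cases β' with
        | nil => rfl
        | cons b' β'' => simp at hm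
      | cons a' α'' =>
        cases β' with
        | nil => simp at hm
        | cons b' β'' =>
          rw [ChainIn, List.Chain', List.isChain_cons_cons] at hα hβ
          have h1 : (a, a') ∈ F := hα.1
          have h2 : (a, b') ∈ F := hβ.1
          have hc : (a', b') ∈ E₀ :=
            hFE ⟨a, hFsym.mk_mem_comm.mp h1, h2⟩
          simp only [List.map_cons, List.cons.injEq] at hm
          obtain ⟨g, hg⟩ := proj_eq_iff.mp hm.2.1.symm
          have hba : b' = a' := by
            rw [← hg]
            exact hE₀ a' g (by rwa [hg])
          subst hba
          have := ih (b' :: β'') hα.2 hβ.2 rfl (by simp [hm.2.2])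
          rw [this]

end Aux

/-- The projection `p : X → X/G` is a uniform covering map iff the action is neutral and
there is an entourage `E₀` with `(x, g•x) ∈ E₀ → g•x = x`. -/
theorem stmt17 (G X : Type*) [Group G] [MulAction G X] [UniformSpace X] :
    (HasChainLifting (proj G X) ∧ HasUniqueChainLifts (proj G X)) ↔
      (Neutral G X ∧ ∃ E₀ ∈ 𝓤 X, SymmetricRel E₀ ∧
        ∀ (x : X) (g : G), (x, g • x) ∈ E₀ → g • x = x) := by
  constructor
  · rintro ⟨hcl, hu⟩
    constructor
    · intro E hE hEsym
      obtain ⟨F, hF, hFsym, hlift⟩ := hcl E hE hEsym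
      refine ⟨F, hF, hFsym, ?_⟩
      intro x y h hxy
      have hmem : (proj G X y, proj G X x) ∈ imgRel (proj G X) F := by
        refine ⟨(h • y, x), hFsym.mk_mem_comm.mp hxy, ?_⟩
        have : proj G X (h • y) = proj G X y := proj_eq_iff.mpr ⟨h, rfl⟩
        simp [Prod.map, this]
      have hd : ChainIn (imgRel (proj G X) F) [proj G X y, proj G X x] := by
        rw [ChainIn, List.Chain', List.isChain_cons_cons]
        exact ⟨hmem, List.isChain_singleton _⟩
      obtain ⟨c, hc, hch, hcm⟩ := hlift y [proj G X y, proj G X x] hd (by simp)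
      rcases c with _ | ⟨c0, _ | ⟨c1, _ | ⟨c2, c'⟩⟩⟩ <;> simp at hcm
      · have hc0 : c0 = y := by simpa using hch
        obtain ⟨g, hg⟩ := proj_eq_iff.mp hcm.2
        rw [ChainIn, List.Chain', List.isChain_cons_cons] at hc
        refine ⟨g, ?_⟩
        rw [hg]
        exact hEsym.mk_mem_comm.mp (hc0 ▸ hc.1)
    · obtain ⟨F, hF, hFsym, huniq⟩ := hu
      refine ⟨F, hF, hFsym, ?_⟩
      intro x g hxg
      have hchain1 : ChainIn F [x, x] := by
        rw [ChainIn, List.Chain', List.isChain_cons_cons]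
        exact ⟨refl_mem_uniformity hF, List.isChain_singleton _⟩
      have hchain2 : ChainIn F [x, g • x] := by
        rw [ChainIn, List.Chain', List.isChain_cons_cons]
        exact ⟨hxg, List.isChain_singleton _⟩
      have hpgx : proj G X (g • x) = proj G X x := proj_eq_iff.mpr ⟨g, rfl⟩
      have := huniq [x, x] [x, g • x] hchain1 hchain2 rfl (by simp [hpgx])
      simpa using (by simpa using this : x = g • x).symm
  · rintro ⟨hneu, E₀, hE₀, hE₀sym, hE₀prop⟩
    constructor
    · intro E hE hEsym
      obtain ⟨F, hF, hFsym, hN⟩ := hneu E hE hEsym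
      exact ⟨F, hF, hFsym, fun x₀ d hc hh => lift_chain E hEsym F hFsym hN d x₀ hc hh⟩
    · obtain ⟨F, hF, hFsym, hFE⟩ := comp_symm_mem_uniformity_sets hE₀
      exact ⟨F, hF, symmetricRel_of_isSymm F, unique_lift E₀ hE₀prop F (symmetricRel_of_isSymm F) hFE⟩
end
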